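/- Under the hypotheses of the affine feedback trading model with GBM price (drift μ, volatility σ > 0), gain K > 0, initial investment u_0 > 0, initial account value V_0 > 0 with u_0 ≤ K·V_0, and stop price 0 < S_* < S_0: the account value V(t) = V_0 + g(t) satisfies V(t) ≥ 0 for all t ≥ 0 almost surely, where g(t) = (u_0/K)((S̃(t)/S_0)^K e^{(1/2)σ²(K−K²)t} − 1) and S̃ is S stopped at S_*. -/

import Mathlib

open MeasureTheory ProbabilityTheory

/-- Survivability, Lemma 7.1: in the affine feedback model with GBM price,
gain `K > 0`, `u₀ > 0`, `V₀ > 0`, `u₀ ≤ K·V₀` and stop price `0 < S_* < S₀`, the account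
value `V(t) = V₀ + g(t)` satisfies `V(t) ≥ 0` for all `t ≥ 0` almost surely, where
`g(t) = (u₀/K)((S̃(t)/S₀)^K e^{(1/2)σ²(K−K²)t} − 1)` and `S̃` is `S` stopped at `S_*`. -/
theorem stmt_16 {Ω : Type*} [MeasurableSpace Ω] (P : Measure Ω) [IsProbabilityMeasure P]
    (W : ℝ → Ω → ℝ)
    (hW0 : ∀ ω, W 0 ω = 0)
    (hWcont : ∀ ω, Continuous fun t => W t ω)
    (hWmeas : ∀ t, Measurable (W t))
    (hWgauss : ∀ s t : ℝ, 0 ≤ s → s ≤ t →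
      Measure.map (fun ω => W t ω - W s ω) P = gaussianReal 0 (Real.toNNReal (t - s)))
    (hWindep : ∀ (n : ℕ) (τ : Fin (n + 1) → ℝ), Monotone τ →
      iIndepFun
        (fun (i : Fin n) ω => W (τ i.succ) ω - W (τ i.castSucc) ω) P)
    (μ σ S0 Sstar u0 K V0 : ℝ) (hσ : 0 < σ) (hS0 : 0 < S0) (hSstar : 0 < Sstar)
    (hSs : Sstar < S0) (hu0 : 0 < u0) (hK : 0 < K) (hV0 : 0 < V0) (huK : u0 ≤ K * V0)
    (S : ℝ → Ω → ℝ)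
    (hS : ∀ t ω, S t ω = S0 * Real.exp ((μ - σ ^ 2 / 2) * t + σ * W t ω))
    (tstar : Ω → ℝ) (htstar : ∀ ω, tstar ω = sInf {t : ℝ | 0 ≤ t ∧ S t ω ≤ Sstar})
    (Stilde : ℝ → Ω → ℝ) (hStilde : ∀ t ω, Stilde t ω = S (min t (tstar ω)) ω)
    (g : ℝ → Ω → ℝ)
    (hg : ∀ t ω, g t ω
      = u0 / K * ((Stilde t ω / S0) ^ K * Real.exp (1 / 2 * σ ^ 2 * (K - K ^ 2) * t) - 1)) :
    ∀ᵐ ω ∂P, ∀ t : ℝ, 0 ≤ t → 0 ≤ V0 + g t ω := by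
  refine ae_of_all P fun ω t ht => ?_
  rw [hg]
  have hA : (0:ℝ) ≤ (Stilde t ω / S0) ^ K * Real.exp (1 / 2 * σ ^ 2 * (K - K ^ 2) * t) := by
    apply mul_nonneg _ (Real.exp_nonneg _)
    apply Real.rpow_nonneg
    rw [hStilde, hS]
    positivity
  have hdiv : u0 / K ≤ V0 := (div_le_iff₀ hK).2 (by linarith [huK, mul_comm K V0])
  have h1 : u0 / K * ((Stilde t ω / S0) ^ K * Real.exp (1 / 2 * σ ^ 2 * (K - K ^ 2) * t) - 1)
      ≥ u0 / K * (0 - 1) := by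
    apply mul_le_mul_of_nonneg_left _ (le_of_lt (div_pos hu0 hK))
    linarith
  linarith
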